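/- arXiv:1509.06408 — 3 statements merged into one kernel-verified Lean document; each statement's English description precedes it below -/
import Mathlib

section
/- Let H be a k-dimensional linear subspace of ℝ^{n+1} with orthonormal basis a^1,...,a^{n+1-k} of its orthogonal complement, and let S̃ = {x ∈ ℝ^{n+1} : Σ_j x_j = 1}. If H ∩ S̃ is nonempty, then the distance from the origin to H ∩ S̃ equals 1/√(n+1 − Σ_{l=1}^{n+1-k} (Σ_{j=1}^{n+1} a^l_j)²). -/
open MeasureTheory

open scoped RealInnerProductSpace

theorem stmt1 (n k : ℕ) (hk : k ≤ n + 1)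
    (H : Submodule ℝ (EuclideanSpace ℝ (Fin (n + 1))))
    (hH : Module.finrank ℝ H = k)
    (a : Fin (n + 1 - k) → EuclideanSpace ℝ (Fin (n + 1)))
    (ha : Orthonormal ℝ a)
    (haH : ∀ l, a l ∈ Hᗮ)
    (hspan : Submodule.span ℝ (Set.range a) = Hᗮ)
    (hne : {x : EuclideanSpace ℝ (Fin (n + 1)) | x ∈ H ∧ ∑ j, x j = 1}.Nonempty) :
    Metric.infDist 0 {x : EuclideanSpace ℝ (Fin (n + 1)) | x ∈ H ∧ ∑ j, x j = 1} =
      1 / Real.sqrt ((n + 1) - ∑ l, (∑ j, a l j) ^ 2) := by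
  classical
  set S : Set (EuclideanSpace ℝ (Fin (n + 1))) :=
    {x : EuclideanSpace ℝ (Fin (n + 1)) | x ∈ H ∧ ∑ j, x j = 1} with hS
  set v : EuclideanSpace ℝ (Fin (n + 1)) := WithLp.toLp 2 (fun _ => (1 : ℝ)) with hvdef
  have hinner : ∀ x : EuclideanSpace ℝ (Fin (n + 1)), ⟪x, v⟫ = ∑ j, x j := by
    intro x
    simp [hvdef, PiLp.inner_apply, RCLike.inner_apply]
  set p : EuclideanSpace ℝ (Fin (n + 1)) := (H.orthogonalProjectionOnto v : EuclideanSpace ℝ (Fin (n + 1))) with hpdef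
  have hpH : p ∈ H := (H.orthogonalProjectionOnto v).2
  have hsub : v - p ∈ Hᗮ := Submodule.sub_starProjection_mem_orthogonal v
  have key : ∀ x ∈ H, ⟪x, p⟫ = ∑ j, x j := by
    intro x hx
    have h0 : ⟪x, v - p⟫ = 0 := hsub x hx
    rw [inner_sub_right] at h0
    have : ⟪x, p⟫ = ⟪x, v⟫ := by linarith
    rw [this, hinner]
  obtain ⟨x0, hx0H, hx0s⟩ := hne
  have hp0 : p ≠ 0 := by
    intro h
    have h1 := key x0 hx0H
    rw [h, inner_zero_right, hx0s] at h1
    norm_num at h1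
  have hpnorm : 0 < ‖p‖ := norm_pos_iff.mpr hp0
  -- norm of p squared
  have hc : ∀ l, ⟪a l, v⟫ = ∑ j, a l j := fun l => hinner (a l)
  set w : EuclideanSpace ℝ (Fin (n + 1)) := ∑ l, (∑ j, a l j) • a l with hw
  have hwH : w ∈ Hᗮ := Submodule.sum_mem _ fun l _ => Submodule.smul_mem _ _ (haH l)
  have hvw : v - w ∈ Hᗮᗮ := by
    rw [← hspan]
    rw [Submodule.mem_orthogonal]
    intro u hu
    induction hu using Submodule.span_induction with
    | mem u hu =>
      obtain ⟨m, rfl⟩ := hu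
      rw [inner_sub_right, hw, ha.inner_right_fintype, hc]
      ring
    | zero => simp
    | add u₁ u₂ _ _ h1 h2 => rw [inner_add_left, h1, h2]; ring
    | smul c u _ h1 => rw [inner_smul_left, h1]; simp
  have hqw : (Hᗮ.orthogonalProjectionOnto v : EuclideanSpace ℝ (Fin (n + 1))) = w :=
    Submodule.eq_starProjection_of_mem_orthogonal hwH hvw
  have hwsq : ‖w‖ ^ 2 = ∑ l, (∑ j, a l j) ^ 2 := by
    rw [← real_inner_self_eq_norm_sq, hw, ha.inner_sum]
    simp [sq]
  have hv2 : ‖v‖ ^ 2 = (n + 1 : ℝ) := by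
    rw [← real_inner_self_eq_norm_sq, hinner]
    simp [hvdef]
  have hnormsq : ‖p‖ ^ 2 = ((n : ℝ) + 1) - ∑ l, (∑ j, a l j) ^ 2 := by
    have hpyth := Submodule.norm_sq_eq_add_norm_sq_projection v H
    rw [← Submodule.norm_coe (H.orthogonalProjectionOnto v),
      ← Submodule.norm_coe (Hᗮ.orthogonalProjectionOnto v), hqw, ← hpdef, hv2, hwsq] at hpyth
    linarith
  -- the minimizing point
  set xs : EuclideanSpace ℝ (Fin (n + 1)) := (‖p‖ ^ 2)⁻¹ • p with hxs
  have hxsH : xs ∈ H := Submodule.smul_mem _ _ hpH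
  have hxsS : xs ∈ S := by
    refine ⟨hxsH, ?_⟩
    rw [← key xs hxsH, hxs, inner_smul_left, real_inner_self_eq_norm_sq]
    simp
    field_simp
  have hxsnorm : dist 0 xs = 1 / ‖p‖ := by
    rw [dist_comm, dist_zero_right, hxs, norm_smul]
    rw [norm_inv, norm_pow, norm_norm]
    field_simp
  have hub : Metric.infDist 0 S ≤ 1 / ‖p‖ := by
    rw [← hxsnorm]
    exact Metric.infDist_le_dist_of_mem hxsS
  have hlb : 1 / ‖p‖ ≤ Metric.infDist 0 S := by
    by_contra hcon
    push_neg at hcon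
    obtain ⟨y, hyS, hyd⟩ := (Metric.infDist_lt_iff ⟨xs, hxsS⟩).1 hcon
    have h1 : ⟪y, p⟫ = 1 := by rw [key y hyS.1, hyS.2]
    have h2 : (1 : ℝ) ≤ ‖y‖ * ‖p‖ := h1 ▸ real_inner_le_norm y p
    rw [dist_comm, dist_zero_right] at hyd
    have : 1 / ‖p‖ ≤ ‖y‖ := by
      rw [div_le_iff₀ hpnorm]
      linarith
    linarith
  have heq : Metric.infDist 0 S = 1 / ‖p‖ := le_antisymm hub hlb
  rw [heq, ← hnormsq, Real.sqrt_sq (norm_nonneg p)]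
end

section
/- Let H be a k-dimensional subspace of ℝ^{n+1} and S̄ = conv(S ∪ {0}) where S is the regular simplex {x ∈ ℝ^{n+1} : Σ x_j = 1, x_j ≥ 0}. Then the k-dimensional volume of H ∩ S̄ equals (1/k!) ∫_{H ∩ ℝ^{n+1}_{≥0}} exp(−Σ_{j=1}^{n+1} x_j) dx, where the integral is with respect to k-dimensional Lebesgue measure on H. -/
open MeasureTheory

open Set Real in
private lemma aux_inner_exp {a : ℝ} (ha : 0 ≤ a) :
    ∫⁻ s in Set.Ioi (0:ℝ),
      Set.indicator (Set.Ici a) (fun p => ENNReal.ofReal (Real.exp (-p))) s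
      = ENNReal.ofReal (Real.exp (-a)) := by
  rw [lintegral_indicator measurableSet_Ici, Measure.restrict_restrict measurableSet_Ici]
  have hset : (Set.Ici a ∩ Set.Ioi 0 : Set ℝ) =ᵐ[volume] Set.Ioi a := by
    rcases eq_or_lt_of_le ha with h | h
    · rw [← h, Set.inter_eq_right.mpr Set.Ioi_subset_Ici_self]
      exact Filter.EventuallyEq.rfl
    · have h2 : (Set.Ici a ∩ Set.Ioi 0 : Set ℝ) = Set.Ici a :=
        Set.inter_eq_left.mpr (fun x hx => lt_of_lt_of_le h hx)
      rw [h2]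
      exact (MeasureTheory.Ioi_ae_eq_Ici (a := a)).symm
  rw [Measure.restrict_congr_set hset,
    ← ofReal_integral_eq_lintegral_ofReal
      (by simpa using (exp_neg_integrableOn_Ioi a one_pos).integrable)
      (Filter.Eventually.of_forall fun x => (exp_pos _).le)]
  rw [integral_exp_neg_Ioi]

open Set Real in
private lemma aux_gamma (k : ℕ) :
    ∫⁻ s in Set.Ioi (0:ℝ), ENNReal.ofReal (Real.exp (-s) * s ^ k)
      = ENNReal.ofReal (Nat.factorial k) := by
  have hint : IntegrableOn (fun s : ℝ => Real.exp (-s) * s ^ k) (Set.Ioi 0) := by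
    have h := Real.GammaIntegral_convergent (s := (k:ℝ)+1) (by positivity)
    refine h.congr_fun ?_ measurableSet_Ioi
    intro x hx
    simp [Real.rpow_natCast]
  rw [← ofReal_integral_eq_lintegral_ofReal hint ?_]
  · congr 1
    have h5 : ∫ s in Set.Ioi (0:ℝ), Real.exp (-s) * s ^ k = Real.Gamma ((k:ℝ)+1) := by
      rw [Real.Gamma_eq_integral (by positivity)]
      refine setIntegral_congr_fun measurableSet_Ioi fun x hx => ?_
      simp [Real.rpow_natCast]
    rw [h5, Real.Gamma_nat_eq_factorial]
  · filter_upwards [ae_restrict_mem measurableSet_Ioi] with s hs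
    have : (0:ℝ) < s := hs
    positivity

open Set Real Pointwise in
private lemma core_lemma {k : ℕ} (μ : Measure (EuclideanSpace ℝ (Fin k)))
    [μ.IsAddHaarMeasure]
    {C : Set (EuclideanSpace ℝ (Fin k))} (hC : MeasurableSet C)
    (ℓ : EuclideanSpace ℝ (Fin k) → ℝ) (hcont : Continuous ℓ)
    (hsmul : ∀ (r : ℝ) x, ℓ (r • x) = r * ℓ x)
    (hscale : ∀ r : ℝ, 0 < r → ∀ x ∈ C, r • x ∈ C)
    (hnn : ∀ x ∈ C, 0 ≤ ℓ x)
    (hfin : μ (C ∩ {x | ℓ x ≤ 1}) ≠ ⊤) :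
    (μ (C ∩ {x | ℓ x ≤ 1})).toReal
      = (1 / (Nat.factorial k : ℝ)) * ∫ x in C, Real.exp (-ℓ x) ∂μ := by
  have hmeas_le : ∀ s : ℝ, MeasurableSet {x : EuclideanSpace ℝ (Fin k) | ℓ x ≤ s} :=
    fun s => measurableSet_le hcont.measurable measurable_const
  set K := C ∩ {x | ℓ x ≤ 1} with hKdef
  have step1 : ∀ s : ℝ, 0 < s → μ (C ∩ {x | ℓ x ≤ s}) = ENNReal.ofReal (s ^ k) * μ K := by
    intro s hs
    have hset : C ∩ {x | ℓ x ≤ s} = s • K := by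
      ext x
      rw [Set.mem_smul_set]
      constructor
      · rintro ⟨hxC, hxs⟩
        refine ⟨s⁻¹ • x, ⟨hscale _ (by positivity) _ hxC, ?_⟩, ?_⟩
        · show ℓ (s⁻¹ • x) ≤ 1
          rw [hsmul]
          calc s⁻¹ * ℓ x ≤ s⁻¹ * s := by gcongr; exact hxs
          _ = 1 := inv_mul_cancel₀ hs.ne'
        · rw [smul_smul, mul_inv_cancel₀ hs.ne', one_smul]
      · rintro ⟨y, ⟨hyC, hy1⟩, rfl⟩
        refine ⟨hscale s hs y hyC, ?_⟩
        show ℓ (s • y) ≤ s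
        rw [hsmul]
        exact mul_le_of_le_one_right hs.le hy1
    rw [hset, Measure.addHaar_smul, finrank_euclideanSpace_fin,
      abs_of_nonneg (by positivity)]
  have hSset : MeasurableSet {p : EuclideanSpace ℝ (Fin k) × ℝ | ℓ p.1 ≤ p.2} :=
    (isClosed_le (hcont.comp continuous_fst) continuous_snd).measurableSet
  have key : ∫⁻ x in C, ENNReal.ofReal (Real.exp (-ℓ x)) ∂μ
      = ENNReal.ofReal (Nat.factorial k) * μ K := by
    have h1 : ∫⁻ x in C, ENNReal.ofReal (Real.exp (-ℓ x)) ∂μ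
        = ∫⁻ x in C, ∫⁻ s in Set.Ioi (0:ℝ),
            ({p : EuclideanSpace ℝ (Fin k) × ℝ | ℓ p.1 ≤ p.2}.indicator
              (fun p => ENNReal.ofReal (Real.exp (-p.2))) (x, s)) ∂volume ∂μ := by
      refine setLIntegral_congr_fun hC (fun x hx => ?_)
      have heq : ∀ s : ℝ, ({p : EuclideanSpace ℝ (Fin k) × ℝ | ℓ p.1 ≤ p.2}.indicator
              (fun p => ENNReal.ofReal (Real.exp (-p.2))) (x, s))
          = Set.indicator (Set.Ici (ℓ x)) (fun p => ENNReal.ofReal (Real.exp (-p))) s := by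
        intro s
        by_cases h : ℓ x ≤ s <;>
          simp [Set.indicator_apply, Set.mem_Ici, Set.mem_setOf_eq, h]
      simp_rw [heq]
      rw [aux_inner_exp (hnn x hx)]
    rw [h1]
    rw [lintegral_lintegral_swap]
    · have h2 : ∫⁻ s in Set.Ioi (0:ℝ), (∫⁻ x in C,
            ({p : EuclideanSpace ℝ (Fin k) × ℝ | ℓ p.1 ≤ p.2}.indicator
              (fun p => ENNReal.ofReal (Real.exp (-p.2))) (x, s)) ∂μ) ∂volume
          = ∫⁻ s in Set.Ioi (0:ℝ),
              ENNReal.ofReal (Real.exp (-s) * s ^ k) * μ K ∂volume := by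
        refine setLIntegral_congr_fun measurableSet_Ioi
          (fun s hs => ?_)
        have hfun : (fun x => ({p : EuclideanSpace ℝ (Fin k) × ℝ | ℓ p.1 ≤ p.2}.indicator
              (fun p => ENNReal.ofReal (Real.exp (-p.2))) (x, s)))
            = {x : EuclideanSpace ℝ (Fin k) | ℓ x ≤ s}.indicator
              (fun _ => ENNReal.ofReal (Real.exp (-s))) := by
          funext x
          by_cases h : ℓ x ≤ s <;> simp [Set.indicator_apply, Set.mem_setOf_eq, h]
        rw [hfun, lintegral_indicator (hmeas_le s), setLIntegral_const,
          Measure.restrict_apply (hmeas_le s), Set.inter_comm, step1 s hs,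
          ← mul_assoc, ← ENNReal.ofReal_mul (exp_pos _).le]
      rw [h2, lintegral_mul_const' (μ K) _ hfin, aux_gamma k]
    · apply Measurable.aemeasurable
      exact Measurable.indicator
        ((ENNReal.measurable_ofReal).comp (continuous_snd.neg.rexp).measurable) hSset
  have hnn' : 0 ≤ᵐ[μ.restrict C] fun x => Real.exp (-ℓ x) :=
    Filter.Eventually.of_forall fun x => (exp_pos _).le
  have hms : AEStronglyMeasurable (fun x => Real.exp (-ℓ x)) (μ.restrict C) :=
    (hcont.neg.rexp).aestronglyMeasurable
  rw [integral_eq_lintegral_of_nonneg_ae hnn' hms, key, ENNReal.toReal_mul,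
    ENNReal.toReal_ofReal (by positivity)]
  have hfact : (Nat.factorial k : ℝ) ≠ 0 := by positivity
  rw [one_div, inv_mul_cancel_left₀ hfact]

theorem stmt2 (n k : ℕ)
    (H : Submodule ℝ (EuclideanSpace ℝ (Fin (n + 1))))
    (hH : Module.finrank ℝ H = k) :
    (μH[(k : ℝ)] ((H : Set (EuclideanSpace ℝ (Fin (n + 1)))) ∩
        convexHull ℝ ({x : EuclideanSpace ℝ (Fin (n + 1)) |
          (∑ j, x j = 1) ∧ ∀ j, 0 ≤ x j} ∪ {0}))).toReal
      = (1 / (Nat.factorial k : ℝ)) *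
        ∫ x in {x : EuclideanSpace ℝ (Fin (n + 1)) | x ∈ H ∧ ∀ j, 0 ≤ x j},
          Real.exp (-∑ j, x j) ∂μH[(k : ℝ)] := by
  subst hH
  classical
  set d : ℕ := Module.finrank ℝ ↥H with hd
  set A := EuclideanSpace ℝ (Fin (n + 1))
  set E := EuclideanSpace ℝ (Fin d) with hE
  -- basic sets
  set O : Set A := {x | ∀ j, 0 ≤ x j} with hO
  set W : Set A := {x | ∑ j, x j ≤ 1} with hW
  have hcoord : ∀ j : Fin (n+1), Continuous (fun x : A => x j) :=
    fun j => (EuclideanSpace.proj j).continuous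
  have hsumc : Continuous (fun x : A => ∑ j, x j) :=
    continuous_finset_sum _ fun j _ => hcoord j
  have hOclosed : IsClosed O := by
    have : O = ⋂ j, {x : A | 0 ≤ x j} := by
      ext x; simp [hO, Set.mem_iInter]
    rw [this]
    exact isClosed_iInter fun j => isClosed_le continuous_const (hcoord j)
  have hTclosed : IsClosed (O ∩ W) :=
    hOclosed.inter (isClosed_le hsumc continuous_const)
  -- convex hull identification
  have hhull : convexHull ℝ ({x : A | (∑ j, x j = 1) ∧ ∀ j, 0 ≤ x j} ∪ {0}) = O ∩ W := by
    apply Set.Subset.antisymm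
    · apply convexHull_min
      · rintro x (hx | hx)
        · exact ⟨hx.2, le_of_eq hx.1⟩
        · rw [Set.mem_singleton_iff] at hx
          subst hx
          refine ⟨fun j => le_rfl, ?_⟩
          show ∑ j, (0 : A) j ≤ 1
          have h00 : (∑ j, (0 : A) j) = 0 :=
            Finset.sum_eq_zero (f := fun j : Fin (n+1) => (0 : A) j) fun j _ => rfl
          rw [h00]
          norm_num
      · rintro x ⟨hx0, hx1⟩ y ⟨hy0, hy1⟩ a b ha hb hab
        have hcoords : ∀ j, (a • x + b • y) j = a * x j + b * y j := fun j => rfl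
        constructor
        · intro j
          rw [hcoords j]
          exact add_nonneg (mul_nonneg ha (hx0 j)) (mul_nonneg hb (hy0 j))
        · show ∑ j, (a • x + b • y) j ≤ 1
          simp_rw [hcoords]
          rw [Finset.sum_add_distrib, ← Finset.mul_sum, ← Finset.mul_sum]
          have hx1' : ∑ j, x j ≤ 1 := hx1
          have hy1' : ∑ j, y j ≤ 1 := hy1
          nlinarith [mul_le_mul_of_nonneg_left hx1' ha, mul_le_mul_of_nonneg_left hy1' hb]
    · rintro x ⟨hx0, hx1⟩
      rcases eq_or_lt_of_le (Finset.sum_nonneg fun j _ => hx0 j) with h0 | h0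
      · have hx : x = 0 := by
          ext j
          exact (Finset.sum_eq_zero_iff_of_nonneg fun i _ => hx0 i).1 h0.symm j
            (Finset.mem_univ j)
        rw [hx]
        exact subset_convexHull ℝ _ (Or.inr rfl)
      · set t : ℝ := ∑ j, x j with ht
        have hyS : t⁻¹ • x ∈ {x : A | ((∑ j, x j) = 1) ∧ ∀ j, 0 ≤ x j} := by
          constructor
          · have hc : ∀ j, (t⁻¹ • x) j = t⁻¹ * x j := fun j => rfl
            simp_rw [hc]
            rw [← Finset.mul_sum, ← ht, inv_mul_cancel₀ h0.ne']
          · intro j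
            have hc : (t⁻¹ • x) j = t⁻¹ * x j := rfl
            rw [hc]
            exact mul_nonneg (inv_nonneg.2 h0.le) (hx0 j)
        have hx1' : t ≤ 1 := hx1
        have hseg : x ∈ segment ℝ (0 : A) (t⁻¹ • x) :=
          ⟨1 - t, t, by linarith, h0.le, by ring,
            by rw [smul_zero, zero_add, smul_smul, mul_inv_cancel₀ h0.ne', one_smul]⟩
        apply (convex_convexHull ℝ _).segment_subset _ _ hseg
        · exact subset_convexHull ℝ _ (Or.inr rfl)
        · exact subset_convexHull ℝ _ (Or.inl hyS)
  -- the isometric parametrization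
  set φ : ↥H ≃ₗᵢ[ℝ] E := (stdOrthonormalBasis ℝ ↥H).repr with hφ
  set Ψ : E →ₗᵢ[ℝ] A := H.subtypeₗᵢ.comp φ.symm.toLinearIsometry with hΨ
  have hψ : Isometry ⇑Ψ := Ψ.isometry
  have hψm : Measurable ⇑Ψ := hψ.continuous.measurable
  have hrange : Set.range ⇑Ψ = (H : Set A) := by
    ext x
    constructor
    · rintro ⟨y, rfl⟩
      exact (φ.symm y).2
    · intro hx
      exact ⟨φ ⟨x, hx⟩, by simp [hΨ]⟩
  haveI : (μH[(d : ℝ)] : Measure E).IsAddHaarMeasure := by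
    have h := MeasureTheory.isAddHaarMeasure_hausdorffMeasure (E := E)
    rwa [show Module.finrank ℝ E = d from finrank_euclideanSpace_fin] at h
  have hmap : Measure.map ⇑Ψ (μH[(d : ℝ)] : Measure E)
      = (μH[(d : ℝ)] : Measure A).restrict (H : Set A) := by
    rw [hψ.map_hausdorffMeasure (Or.inl (by positivity)), hrange]
  have hHmeas : MeasurableSet (H : Set A) :=
    (Submodule.closed_of_finiteDimensional H).measurableSet
  -- objects for the core lemma
  set C : Set E := ⇑Ψ ⁻¹' O with hC
  set ℓ : E → ℝ := fun y => ∑ j, Ψ y j with hℓ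
  have hCmeas : MeasurableSet C := (hOclosed.preimage hψ.continuous).measurableSet
  have hℓcont : Continuous ℓ := hsumc.comp hψ.continuous
  have hℓsmul : ∀ (r : ℝ) y, ℓ (r • y) = r * ℓ y := by
    intro r y
    show ∑ j, Ψ (r • y) j = r * ∑ j, Ψ y j
    rw [Ψ.map_smul, Finset.mul_sum]
    exact Finset.sum_congr rfl fun j _ => rfl
  have hℓscale : ∀ r : ℝ, 0 < r → ∀ y ∈ C, r • y ∈ C := by
    intro r hr y hy j
    show 0 ≤ Ψ (r • y) j
    rw [Ψ.map_smul]
    have hc : (r • Ψ y) j = r * Ψ y j := rfl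
    rw [hc]
    exact mul_nonneg hr.le (hy j)
  have hℓnn : ∀ y ∈ C, 0 ≤ ℓ y := fun y hy => Finset.sum_nonneg fun j _ => hy j
  have hpre : ⇑Ψ ⁻¹' (O ∩ W) = C ∩ {y | ℓ y ≤ 1} := by
    ext y
    simp [hC, hO, hW, hℓ, Set.mem_preimage, Set.mem_inter_iff]
  have hcomp : IsCompact (⇑Ψ ⁻¹' (O ∩ W)) := by
    refine Metric.isCompact_of_isClosed_isBounded (hTclosed.preimage hψ.continuous) ?_
    rw [isBounded_iff_forall_norm_le]
    refine ⟨Real.sqrt (n + 1), fun y hy => ?_⟩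
    obtain ⟨h0, h1⟩ := hy
    have hnorm : ‖y‖ = ‖Ψ y‖ := (Ψ.norm_map y).symm
    rw [hnorm, EuclideanSpace.norm_eq]
    apply Real.sqrt_le_sqrt
    have hle1 : ∀ j, Ψ y j ≤ 1 := by
      intro j
      calc Ψ y j ≤ ∑ i, Ψ y i :=
            Finset.single_le_sum (fun i _ => h0 i) (Finset.mem_univ j)
        _ ≤ 1 := h1
    calc (∑ j, ‖Ψ y j‖ ^ 2) ≤ ∑ _j : Fin (n+1), (1:ℝ) := by
          refine Finset.sum_le_sum fun j _ => ?_
          rw [Real.norm_eq_abs, sq_abs]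
          nlinarith [h0 j, hle1 j]
      _ = (n + 1 : ℝ) := by simp
  have hfin : (μH[(d : ℝ)] : Measure E) (C ∩ {y | ℓ y ≤ 1}) ≠ ⊤ := by
    rw [← hpre]
    exact hcomp.measure_lt_top.ne
  -- rewrite LHS
  have hTmeas : MeasurableSet (O ∩ W) := hTclosed.measurableSet
  have hLHS : (μH[(d : ℝ)] : Measure A) ((H : Set A) ∩ (O ∩ W))
      = (μH[(d : ℝ)] : Measure E) (C ∩ {y | ℓ y ≤ 1}) := by
    rw [Set.inter_comm, ← Measure.restrict_apply' hHmeas, ← hmap,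
      Measure.map_apply hψm hTmeas, hpre]
  -- rewrite RHS integral
  have hsetA : {x : A | x ∈ H ∧ ∀ j, 0 ≤ x j} = O ∩ (H : Set A) := by
    ext x
    simp [hO, Set.mem_inter_iff, and_comm]
  have hOmeas : MeasurableSet O := hOclosed.measurableSet
  have hint_eq : ∫ x in {x : A | x ∈ H ∧ ∀ j, 0 ≤ x j},
        Real.exp (-∑ j, x j) ∂(μH[(d : ℝ)] : Measure A)
      = ∫ y in C, Real.exp (-ℓ y) ∂(μH[(d : ℝ)] : Measure E) := by
    rw [hsetA, ← Measure.restrict_restrict hOmeas, ← hmap,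
      Measure.restrict_map hψm hOmeas,
      integral_map (f := fun x : A => Real.exp (-∑ j, x j)) hψm.aemeasurable
        ((hsumc.neg.rexp).aestronglyMeasurable)]
  rw [hhull, hLHS, hint_eq]
  exact core_lemma (μH[(d : ℝ)]) hCmeas ℓ hℓcont hℓsmul hℓscale hℓnn hfin
end

section
/- Define for N = 5 and x ∈ [0,1]: V(x) = (√N/N!)·√(1/(Nx+1)² + 1/(N(1−x)+1)² + N·(x/(Nx+1) − (1−x)/(N(1−x)+1))²) · Σ_{m=0}^{N−1} (Nx/(Nx+1))^{N−1−m}·(N(1−x)/(N(1−x)+1))^m. Then V(1/2) > V(0); explicitly V(0) = (125/186624)·√5·√42 < (625/201684)·√10 = V(1/2). -/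
noncomputable def V17 (x : ℝ) : ℝ :=
  (Real.sqrt 5 / 120) *
    Real.sqrt (1 / (5 * x + 1) ^ 2 + 1 / (5 * (1 - x) + 1) ^ 2 +
      5 * (x / (5 * x + 1) - (1 - x) / (5 * (1 - x) + 1)) ^ 2) *
    ∑ m ∈ Finset.range 5,
      (5 * x / (5 * x + 1)) ^ (4 - m) * (5 * (1 - x) / (5 * (1 - x) + 1)) ^ m

theorem stmt17 :
    V17 (1 / 2) > V17 0 ∧
    V17 0 = 125 / 186624 * Real.sqrt 5 * Real.sqrt 42 ∧
    V17 (1 / 2) = 625 / 201684 * Real.sqrt 10 := by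
  have s42 : Real.sqrt 42 ≥ 0 := Real.sqrt_nonneg _
  have h0 : V17 0 = 125 / 186624 * Real.sqrt 5 * Real.sqrt 42 := by
    unfold V17
    rw [show (1 / (5 * (0:ℝ) + 1) ^ 2 + 1 / (5 * (1 - 0) + 1) ^ 2 +
      5 * (0 / (5 * 0 + 1) - (1 - 0) / (5 * (1 - 0) + 1)) ^ 2) = 42 / 6 ^ 2 by norm_num]
    rw [Real.sqrt_div' 42 (by norm_num), Real.sqrt_sq (by norm_num : (0:ℝ) ≤ 6)]
    rw [Finset.sum_range_succ, Finset.sum_range_succ, Finset.sum_range_succ,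
      Finset.sum_range_succ, Finset.sum_range_succ]
    norm_num
    ring
  have h1 : V17 (1 / 2) = 625 / 201684 * Real.sqrt 10 := by
    unfold V17
    rw [show (1 / (5 * ((1:ℝ)/2) + 1) ^ 2 + 1 / (5 * (1 - 1/2) + 1) ^ 2 +
      5 * ((1/2) / (5 * (1/2) + 1) - (1 - 1/2) / (5 * (1 - 1/2) + 1)) ^ 2)
        = (2/7)^2 * 2 by norm_num]
    rw [Real.sqrt_mul (by positivity)]
    rw [Real.sqrt_sq (by norm_num : (0:ℝ) ≤ 2/7)]
    rw [Finset.sum_range_succ, Finset.sum_range_succ, Finset.sum_range_succ,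
      Finset.sum_range_succ, Finset.sum_range_succ]
    have h52 : Real.sqrt 5 * Real.sqrt 2 = Real.sqrt 10 := by
      rw [← Real.sqrt_mul (by norm_num)]; norm_num
    norm_num
    rw [div_mul_eq_mul_div, mul_comm (Real.sqrt 5)]
    nlinarith [h52, Real.sqrt_nonneg 2, Real.sqrt_nonneg 5]
  refine ⟨?_, h0, h1⟩
  rw [h0, h1]
  have key : (125 / 186624 * Real.sqrt 5 * Real.sqrt 42) ^ 2
      < (625 / 201684 * Real.sqrt 10) ^ 2 := by
    have e5 : Real.sqrt 5 ^ 2 = 5 := Real.sq_sqrt (by norm_num)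
    have e42 : Real.sqrt 42 ^ 2 = 42 := Real.sq_sqrt (by norm_num)
    have e10 : Real.sqrt 10 ^ 2 = 10 := Real.sq_sqrt (by norm_num)
    have : (125 / 186624 * Real.sqrt 5 * Real.sqrt 42) ^ 2
        = (125/186624)^2 * 5 * 42 := by
      rw [mul_pow, mul_pow, e5, e42]
    rw [this]
    have : (625 / 201684 * Real.sqrt 10) ^ 2 = (625/201684)^2 * 10 := by
      rw [mul_pow, e10]
    rw [this]
    norm_num
  have hb : 0 ≤ 125 / 186624 * Real.sqrt 5 * Real.sqrt 42 := by positivity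
  nlinarith [Real.sqrt_nonneg 10]
end
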